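/- arXiv:1002.0629 — 2 statements merged into one kernel-verified Lean document; each statement's English description precedes it below -/
import Mathlib

section
/- Let d ≥ 4 be an integer and ν : ℕ → ℕ a finitely supported function with ν_m = 0 for m ≤ 1. Set χ1 = 3 − 2d + Σ_m (m−1)·ν_m, χ2 = 2d − Σ_m m·ν_m, and define Z(s) = (1/(ds+3))·(χ1 + χ2/(s+1) + Σ_m (2 − m + m/(s+1))·ν_m/(ms+2)) ∈ ℚ(s). Then Z has a pole of order exactly 2 at s = −3/d if and only if d is divisible by 3 and ν_{2d/3} ≠ 0; and in all cases the order of the pole of Z at −3/d is at most 2. (Proposition 1.6, criterion for the double pole at −3/d.) -/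
open Polynomial

/-- The order of a rational function `Z ∈ ℚ(s)` at a point `α ∈ ℚ`: the integer `k`
such that `Z = (s-α)^k · (u/v)` with `u`, `v` not vanishing at `α`. -/
noncomputable def orderAt (Z : RatFunc ℚ) (α : ℚ) : ℤ :=
  (rootMultiplicity α Z.num : ℤ) - (rootMultiplicity α Z.denom : ℤ)

local notation "π" => algebraMap ℚ[X] (RatFunc ℚ)

lemma orderAt_div' (α : ℚ) (p q : ℚ[X]) (hp : p ≠ 0) (hq : q ≠ 0) :
    orderAt (π p / π q) α = (rootMultiplicity α p : ℤ) - rootMultiplicity α q := by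
  set Z := π p / π q with hZdef
  have hZ : Z ≠ 0 := div_ne_zero (RatFunc.algebraMap_ne_zero hp) (RatFunc.algebraMap_ne_zero hq)
  have hnum : Z.num ≠ 0 := RatFunc.num_ne_zero hZ
  have key : p * Z.denom = Z.num * q := by
    apply RatFunc.algebraMap_injective ℚ
    rw [map_mul, map_mul]
    have h1 : π Z.num / π Z.denom = Z := RatFunc.num_div_denom Z
    rw [hZdef, div_eq_div_iff (RatFunc.algebraMap_ne_zero (RatFunc.denom_ne_zero Z))
      (RatFunc.algebraMap_ne_zero hq)] at h1
    linear_combination -h1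
  have h2 := rootMultiplicity_mul (x := α) (mul_ne_zero hp (RatFunc.denom_ne_zero Z))
  rw [key, rootMultiplicity_mul (mul_ne_zero hnum hq)] at h2
  unfold orderAt
  omega

lemma rm_linear_one (a b α : ℚ) (ha : a ≠ 0) (h : a * α + b = 0) :
    rootMultiplicity α (C a * X + C b) = 1 := by
  have hb : C b = C a * (- C α) := by
    rw [← map_neg, ← map_mul]; congr 1; linarith
  have hfac : C a * X + C b = C a * (X - C α) := by rw [hb]; ring
  rw [hfac, rootMultiplicity_mul (mul_ne_zero (by simpa using ha) (X_sub_C_ne_zero α)),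
    rootMultiplicity_X_sub_C_self, rootMultiplicity_eq_zero (by simpa [IsRoot] using ha)]

lemma rm_eval_ne (p : ℚ[X]) (α : ℚ) (h : p.eval α ≠ 0) : rootMultiplicity α p = 0 :=
  rootMultiplicity_eq_zero h

/-- Proposition 1.6 (criterion for the double pole at `-3/d`): with
`χ₁ = 3 - 2d + Σₘ (m-1)νₘ`, `χ₂ = 2d - Σₘ m νₘ`, the zeta function
`Z(s) = (1/(ds+3)) · (χ₁ + χ₂/(s+1) + Σₘ (2 - m + m/(s+1)) νₘ/(ms+2))` has a pole of order
exactly `2` at `s = -3/d` iff `3 ∣ d` and `ν_{2d/3} ≠ 0`; and the pole order is at most `2`. -/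
theorem statement4 (d : ℕ) (hd : 4 ≤ d) (ν : ℕ →₀ ℕ) (hν1 : ∀ m ≤ 1, ν m = 0)
    (χ1 χ2 : ℚ)
    (hχ1 : χ1 = 3 - 2 * (d : ℚ) + ∑ m ∈ ν.support, ((m : ℚ) - 1) * (ν m : ℚ))
    (hχ2 : χ2 = 2 * (d : ℚ) - ∑ m ∈ ν.support, (m : ℚ) * (ν m : ℚ))
    (Z : RatFunc ℚ)
    (hZ : Z = 1 / ((d : RatFunc ℚ) * RatFunc.X + 3) *
      (RatFunc.C χ1 + RatFunc.C χ2 / (RatFunc.X + 1) +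
        ∑ m ∈ ν.support,
          ((2 : RatFunc ℚ) - (m : RatFunc ℚ) + (m : RatFunc ℚ) / (RatFunc.X + 1)) *
            (ν m : RatFunc ℚ) / ((m : RatFunc ℚ) * RatFunc.X + 2))) :
    (orderAt Z (-3 / (d : ℚ)) = -2 ↔ 3 ∣ d ∧ ν (2 * d / 3) ≠ 0) ∧
      -2 ≤ orderAt Z (-3 / (d : ℚ)) := by
  have hd0 : (d : ℚ) ≠ 0 := Nat.cast_ne_zero.2 (by omega)
  have hd4 : (4 : ℚ) ≤ (d : ℚ) := by exact_mod_cast hd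
  set α : ℚ := -3 / (d : ℚ) with hαdef
  -- basic nonvanishing of polynomials
  have hgne : ∀ m : ℕ, (C (m:ℚ) * X + C 2 : ℚ[X]) ≠ 0 := by
    intro m h; simpa using congrArg (eval 0) h
  have hdne : (C (d:ℚ) * X + C 3 : ℚ[X]) ≠ 0 := by
    intro h; simpa using congrArg (eval 0) h
  obtain ⟨P, hPdef⟩ : ∃ p : ℚ[X], p = ∏ m ∈ ν.support, (C (m:ℚ) * X + C 2) := ⟨_, rfl⟩
  have hPne : P ≠ 0 := hPdef ▸ Finset.prod_ne_zero_iff.2 fun m _ => hgne m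
  have hx1ne : (X + C 1 : ℚ[X]) ≠ 0 := X_add_C_ne_zero 1
  obtain ⟨S, hSdef⟩ : ∃ s : ℚ[X], s = ∑ m ∈ ν.support,
      (C ((2:ℚ) - (m:ℚ)) * (X + C 1) + C (m:ℚ)) * C ((ν m : ℚ)) *
        ∏ m' ∈ ν.support.erase m, (C (m':ℚ) * X + C 2) := ⟨_, rfl⟩
  obtain ⟨N, hNdef⟩ : ∃ n : ℚ[X], n = C χ1 * ((X + C 1) * P) + C χ2 * P + S := ⟨_, rfl⟩
  obtain ⟨D, hDdef⟩ : ∃ e : ℚ[X], e = (C (d:ℚ) * X + C 3) * ((X + C 1) * P) := ⟨_, rfl⟩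
  have hDne : D ≠ 0 := hDdef ▸ mul_ne_zero hdne (mul_ne_zero hx1ne hPne)
  -- Step A : Z = π N / π D
  have hπx1 : (RatFunc.X + 1 : RatFunc ℚ) ≠ 0 := by
    have := RatFunc.algebraMap_ne_zero (K := ℚ) hx1ne
    simpa [map_add, RatFunc.algebraMap_X, RatFunc.algebraMap_C] using this
  have hπg : ∀ m : ℕ, ((m : RatFunc ℚ) * RatFunc.X + 2) ≠ 0 := by
    intro m
    have := RatFunc.algebraMap_ne_zero (K := ℚ) (hgne m)
    simpa [map_add, map_mul, RatFunc.algebraMap_X, RatFunc.algebraMap_C,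
      map_natCast, map_ofNat] using this
  have hπP : π P ≠ 0 := RatFunc.algebraMap_ne_zero hPne
  have hdR : ((d : RatFunc ℚ) * RatFunc.X + 3) ≠ 0 := by
    have := RatFunc.algebraMap_ne_zero (K := ℚ) hdne
    simpa [map_add, map_mul, RatFunc.algebraMap_X, RatFunc.algebraMap_C,
      map_natCast, map_ofNat] using this
  have hA : Z = π N / π D := by
    have hsum : ∑ m ∈ ν.support,
        ((2 : RatFunc ℚ) - (m : RatFunc ℚ) + (m : RatFunc ℚ) / (RatFunc.X + 1)) *
          (ν m : RatFunc ℚ) / ((m : RatFunc ℚ) * RatFunc.X + 2)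
        = π S / ((RatFunc.X + 1) * π P) := by
      rw [hSdef, eq_div_iff (mul_ne_zero hπx1 hπP), Finset.sum_mul, map_sum]
      refine Finset.sum_congr rfl fun m hm => ?_
      have hPm : P = (C (m:ℚ) * X + C 2) * ∏ m' ∈ ν.support.erase m, (C (m':ℚ) * X + C 2) := by
        rw [hPdef]; exact (Finset.mul_prod_erase _ _ hm).symm
      rw [hPm, map_mul, map_mul, map_mul]
      generalize π (∏ m' ∈ ν.support.erase m, (C (m' : ℚ) * X + C 2)) = Q
      simp only [map_add, map_mul, map_sub, map_one, RatFunc.algebraMap_X, RatFunc.algebraMap_C,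
        map_natCast, map_ofNat]
      field_simp [hπg m]
    rw [hZ, hsum, hNdef, hDdef, eq_div_iff (RatFunc.algebraMap_ne_zero (mul_ne_zero hdne (mul_ne_zero hx1ne hPne)))]
    simp only [map_add, map_mul, map_one, RatFunc.algebraMap_X, RatFunc.algebraMap_C,
      map_natCast, map_ofNat]
    field_simp
  -- root facts at α
  have hroot : ∀ m : ℕ, ((m:ℚ) * α + 2 = 0) ↔ 3 * m = 2 * d := by
    intro m
    rw [hαdef]
    constructor
    · intro h
      have : (3:ℚ) * m = 2 * d := by field_simp at h; linarith
      exact_mod_cast this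
    · intro h
      have h' : (3:ℚ) * m = 2 * d := by exact_mod_cast h
      field_simp
      linarith
  have hα1 : α + 1 ≠ 0 := by
    rw [hαdef]
    intro h
    have : (d : ℚ) = 3 := by field_simp at h; linarith
    have : d = 3 := by exact_mod_cast this
    omega
  have hrm_d : rootMultiplicity α (C (d:ℚ) * X + C 3) = 1 := by
    apply rm_linear_one _ _ _ hd0
    rw [hαdef]; field_simp; ring
  have hrm_x1 : rootMultiplicity α (X + C 1) = 0 := by
    apply rm_eval_ne; simpa using hα1
  by_cases hc : 3 ∣ d ∧ ν (2 * d / 3) ≠ 0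
  · -- double pole case
    obtain ⟨hdvd, hν0⟩ := hc
    set m0 : ℕ := 2 * d / 3 with hm0def
    have h3m0 : 3 * m0 = 2 * d := by omega
    have hm0s : m0 ∈ ν.support := Finsupp.mem_support_iff.2 hν0
    have hm0root : (m0:ℚ) * α + 2 = 0 := (hroot m0).2 h3m0
    have hm0Q : (m0 : ℚ) ≠ 0 := Nat.cast_ne_zero.2 (by omega)
    have heraseroot : ∀ m' ∈ ν.support.erase m0, (m':ℚ) * α + 2 ≠ 0 := by
      intro m' hm' h
      have h3m' : 3 * m' = 2 * d := (hroot m').1 h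
      exact (Finset.mem_erase.1 hm').1 (by omega)
    have herase_ne : (∏ m' ∈ ν.support.erase m0, ((m':ℚ) * α + 2)) ≠ 0 :=
      Finset.prod_ne_zero_iff.2 heraseroot
    -- rootMultiplicity of P is 1
    have hPm0 : P = (C (m0:ℚ) * X + C 2) * ∏ m' ∈ ν.support.erase m0, (C (m':ℚ) * X + C 2) := by
      rw [hPdef]; exact (Finset.mul_prod_erase _ _ hm0s).symm
    have herase_poly_ne : (∏ m' ∈ ν.support.erase m0, (C (m':ℚ) * X + C 2) : ℚ[X]) ≠ 0 :=
      Finset.prod_ne_zero_iff.2 fun m _ => hgne m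
    have hrmP : rootMultiplicity α P = 1 := by
      rw [hPm0, rootMultiplicity_mul (mul_ne_zero (hgne m0) herase_poly_ne),
        rm_linear_one _ _ _ hm0Q hm0root, rm_eval_ne]
      simpa [eval_prod] using herase_ne
    have hrmD : rootMultiplicity α D = 2 := by
      rw [hDdef, rootMultiplicity_mul (mul_ne_zero hdne (mul_ne_zero hx1ne hPne)),
        rootMultiplicity_mul (mul_ne_zero hx1ne hPne), hrm_d, hrm_x1, hrmP]
    -- eval of N at α is nonzero
    have hPα : eval α P = 0 := by
      rw [hPdef, eval_prod]
      refine Finset.prod_eq_zero hm0s ?_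
      simpa using hm0root
    have hSα : eval α S = (((2:ℚ) - m0) * (α + 1) + m0) * (ν m0 : ℚ) *
        ∏ m' ∈ ν.support.erase m0, ((m':ℚ) * α + 2) := by
      rw [hSdef, eval_finset_sum]
      rw [Finset.sum_eq_single m0]
      · simp [eval_prod]
      · intro b hb hbne
        have hm0b : m0 ∈ ν.support.erase b := Finset.mem_erase.2 ⟨fun h => hbne h.symm, hm0s⟩
        simp only [eval_mul, eval_add, eval_C, eval_X, eval_prod]
        rw [Finset.prod_eq_zero hm0b (by simpa using hm0root), mul_zero]
      · intro h; exact absurd hm0s h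
    have hfac1 : ((2:ℚ) - m0) * (α + 1) + m0 = (4 * d - 6) / d := by
      have h3m0Q : (3:ℚ) * m0 = 2 * d := by exact_mod_cast h3m0
      rw [hαdef]
      field_simp
      linarith
    have hNα : eval α N ≠ 0 := by
      rw [hNdef]
      simp only [eval_add, eval_mul, eval_C, eval_X, hPα, hSα, mul_zero, zero_add, add_zero]
      refine mul_ne_zero (mul_ne_zero ?_ (Nat.cast_ne_zero.2 hν0)) herase_ne
      rw [hfac1]
      apply div_ne_zero _ hd0
      intro h; nlinarith
    have hNne : N ≠ 0 := fun h => hNα (by rw [h]; simp)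
    have hrmN : rootMultiplicity α N = 0 := rm_eval_ne _ _ hNα
    have horder : orderAt Z α = -2 := by
      rw [hA, orderAt_div' α N D hNne hDne, hrmN, hrmD]
      norm_num
    refine ⟨iff_of_true horder ⟨hdvd, hν0⟩, by rw [horder]⟩
  · -- no double pole
    have hnoroot : ∀ m ∈ ν.support, (m:ℚ) * α + 2 ≠ 0 := by
      intro m hm h
      have h3m : 3 * m = 2 * d := (hroot m).1 h
      exact hc ⟨by omega, by
        have : m = 2 * d / 3 := by omega
        rw [← this]; exact Finsupp.mem_support_iff.1 hm⟩
    have hrmP : rootMultiplicity α P = 0 := by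
      apply rm_eval_ne
      rw [hPdef, eval_prod]
      refine Finset.prod_ne_zero_iff.2 fun m hm => ?_
      simpa using hnoroot m hm
    have hrmD : rootMultiplicity α D = 1 := by
      rw [hDdef, rootMultiplicity_mul (mul_ne_zero hdne (mul_ne_zero hx1ne hPne)),
        rootMultiplicity_mul (mul_ne_zero hx1ne hPne), hrm_d, hrm_x1, hrmP]
    by_cases hN0 : N = 0
    · have hZ0 : Z = 0 := by rw [hA, hN0]; simp
      have horder : orderAt Z α = 0 := by
        rw [hZ0]; unfold orderAt
        simp
      refine ⟨iff_of_false (by rw [horder]; norm_num) hc, by rw [horder]; norm_num⟩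
    · have horder : orderAt Z α = (rootMultiplicity α N : ℤ) - 1 := by
        rw [hA, orderAt_div' α N D hN0 hDne, hrmD]
        norm_num
      refine ⟨iff_of_false (by rw [horder]; omega) hc, by rw [horder]; omega⟩
end

section
/- Let L be a finite set of d distinct 2-dimensional linear subspaces of ℂ³ with d ≥ 2, such that every 1-dimensional linear subspace of ℂ³ is contained in at most d − 2 members of L. For m ≥ 2 let ν_m be the number of 1-dimensional subspaces contained in exactly m members of L, and assume ν_m = 0 whenever 3m = 2d. Set C = (9/(d−3))·(d − 1 + Σ_m (m(m−1)/(2d−3m))·ν_m). Then C > 0 if every m with ν_m ≠ 0 satisfies 3m < 2d, and C < 0 if some m with ν_m ≠ 0 satisfies 3m > 2d. (Proposition 1.8, sign of the coefficient C_{−3/d}.) -/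
open Module

set_option maxHeartbeats 1000000


lemma aux_rank3 : finrank ℂ (Fin 3 → ℂ) = 3 := by simp

lemma aux_inf_rank (ℓ₁ ℓ₂ : Submodule ℂ (Fin 3 → ℂ)) (h1 : finrank ℂ ℓ₁ = 2)
    (h2 : finrank ℂ ℓ₂ = 2) (hne : ℓ₁ ≠ ℓ₂) : finrank ℂ ↥(ℓ₁ ⊓ ℓ₂) = 1 := by
  have hsum := Submodule.finrank_sup_add_finrank_inf_eq ℓ₁ ℓ₂
  have hsup : finrank ℂ ↥(ℓ₁ ⊔ ℓ₂) ≤ 3 := by calc finrank ℂ ↥(ℓ₁ ⊔ ℓ₂) ≤ finrank ℂ (Fin 3 → ℂ) := Submodule.finrank_le _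
      _ = 3 := aux_rank3
  have hinfle : finrank ℂ ↥(ℓ₁ ⊓ ℓ₂) ≤ 2 := h1 ▸ Submodule.finrank_mono inf_le_left
  have hne2 : finrank ℂ ↥(ℓ₁ ⊓ ℓ₂) ≠ 2 := by
    intro h
    apply hne
    have e1 : ℓ₁ ⊓ ℓ₂ = ℓ₁ := Submodule.eq_of_le_of_finrank_le inf_le_left (by omega)
    have e2 : ℓ₁ ⊓ ℓ₂ = ℓ₂ := Submodule.eq_of_le_of_finrank_le inf_le_right (by omega)
    rw [← e1, e2]
  omega

lemma aux_point_eq (p ℓ₁ ℓ₂ : Submodule ℂ (Fin 3 → ℂ)) (hp : finrank ℂ p = 1)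
    (h1 : finrank ℂ ℓ₁ = 2) (h2 : finrank ℂ ℓ₂ = 2) (hne : ℓ₁ ≠ ℓ₂)
    (hp1 : p ≤ ℓ₁) (hp2 : p ≤ ℓ₂) : p = ℓ₁ ⊓ ℓ₂ :=
  Submodule.eq_of_le_of_finrank_le (le_inf hp1 hp2)
    (by rw [aux_inf_rank ℓ₁ ℓ₂ h1 h2 hne, hp])

lemma aux_sup_rank (p q : Submodule ℂ (Fin 3 → ℂ)) (hp : finrank ℂ p = 1)
    (hq : finrank ℂ q = 1) (hne : p ≠ q) : 2 ≤ finrank ℂ ↥(p ⊔ q) := by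
  have hsum := Submodule.finrank_sup_add_finrank_inf_eq p q
  have hinfle : finrank ℂ ↥(p ⊓ q) ≤ 1 := hp ▸ Submodule.finrank_mono inf_le_left
  have hne1 : finrank ℂ ↥(p ⊓ q) ≠ 1 := by
    intro h
    apply hne
    have e1 : p ⊓ q = p := Submodule.eq_of_le_of_finrank_le inf_le_left (by omega)
    have e2 : p ⊓ q = q := Submodule.eq_of_le_of_finrank_le inf_le_right (by omega)
    rw [← e1, e2]
  omega

/-- Proposition 1.8 (sign of the coefficient `C_{-3/d}`): for a finite set `L` of `d ≥ 2`
distinct lines in `ℙ²(ℂ)` (2-dimensional subspaces of `ℂ³`) with every point on at most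
`d - 2` of them, `νₘ` the number of points of multiplicity `m` (for `m ≥ 2`), assuming
`νₘ = 0` whenever `3m = 2d`, the coefficient
`C = (9/(d-3)) · (d - 1 + Σₘ m(m-1)νₘ/(2d-3m))` is positive if `3m < 2d` for every `m`
with `νₘ ≠ 0` (the origin is a good dense edge), and negative if `3m > 2d` for some such `m`. -/
theorem statement6 (L : Finset (Submodule ℂ (Fin 3 → ℂ)))
    (d : ℕ) (hdcard : d = L.card) (hd2 : 2 ≤ d)
    (hL : ∀ ℓ ∈ L, finrank ℂ ℓ = 2)
    (hind : ∀ p : Submodule ℂ (Fin 3 → ℂ), finrank ℂ p = 1 →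
      {ℓ : Submodule ℂ (Fin 3 → ℂ) | ℓ ∈ L ∧ p ≤ ℓ}.ncard ≤ d - 2)
    (ν : ℕ → ℕ)
    (hν : ∀ m, 2 ≤ m → ν m =
      {p : Submodule ℂ (Fin 3 → ℂ) | finrank ℂ p = 1 ∧
        {ℓ : Submodule ℂ (Fin 3 → ℂ) | ℓ ∈ L ∧ p ≤ ℓ}.ncard = m}.ncard)
    (hno : ∀ m, 2 ≤ m → 3 * m = 2 * d → ν m = 0)
    (C : ℚ)
    (hC : C = 9 / ((d : ℚ) - 3) *
      ((d : ℚ) - 1 + ∑ m ∈ Finset.Icc 2 d,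
        (m : ℚ) * ((m : ℚ) - 1) / (2 * (d : ℚ) - 3 * (m : ℚ)) * (ν m : ℚ))) :
    ((∀ m, 2 ≤ m → ν m ≠ 0 → 3 * m < 2 * d) → 0 < C) ∧
      ((∃ m, 2 ≤ m ∧ ν m ≠ 0 ∧ 2 * d < 3 * m) → C < 0) := by
  classical
  set lines : Submodule ℂ (Fin 3 → ℂ) → Finset (Submodule ℂ (Fin 3 → ℂ)) :=
    fun p => L.filter (fun ℓ => p ≤ ℓ) with hlines
  set mult : Submodule ℂ (Fin 3 → ℂ) → ℕ := fun p => (lines p).card with hmult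
  have hsetmul : ∀ p : Submodule ℂ (Fin 3 → ℂ),
      {ℓ : Submodule ℂ (Fin 3 → ℂ) | ℓ ∈ L ∧ p ≤ ℓ}.ncard = mult p := by
    intro p
    have : {ℓ : Submodule ℂ (Fin 3 → ℂ) | ℓ ∈ L ∧ p ≤ ℓ} = ↑(lines p) := by
      ext ℓ; simp [hlines]
    rw [this, Set.ncard_coe_finset]
  have hind' : ∀ p : Submodule ℂ (Fin 3 → ℂ), finrank ℂ p = 1 → mult p ≤ d - 2 := by
    intro p hp; have := hind p hp; rwa [hsetmul] at this
  have hν' : ∀ m, 2 ≤ m → ν m =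
      {p : Submodule ℂ (Fin 3 → ℂ) | finrank ℂ p = 1 ∧ mult p = m}.ncard := by
    intro m hm; rw [hν m hm]
    congr 1; ext p; simp only [Set.mem_setOf_eq, hsetmul]
  -- two distinct lines give a point of multiplicity ≥ 2
  have hmult2 : ∀ ℓ₁ ∈ L, ∀ ℓ₂ ∈ L, ℓ₁ ≠ ℓ₂ → 2 ≤ mult (ℓ₁ ⊓ ℓ₂) := by
    intro ℓ₁ h1 ℓ₂ h2 hne
    have hsub : ({ℓ₁, ℓ₂} : Finset _) ⊆ lines (ℓ₁ ⊓ ℓ₂) := by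
      intro x hx
      simp only [Finset.mem_insert, Finset.mem_singleton] at hx
      rcases hx with rfl | rfl <;> simp [hlines, h1, h2, inf_le_left, inf_le_right]
    have := Finset.card_le_card hsub
    rwa [Finset.card_pair hne] at this
  have hd4 : 4 ≤ d := by
    obtain ⟨a, ha, b, hb, hab⟩ := Finset.one_lt_card.1 (by omega : 1 < L.card)
    have hr := aux_inf_rank a b (hL a ha) (hL b hb) hab
    have h2 := hmult2 a ha b hb hab
    have h3 := hind' _ hr
    omega
  -- the finite set of multiple points
  set Q : Finset (Submodule ℂ (Fin 3 → ℂ)) :=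
    ((L ×ˢ L).image (fun q => q.1 ⊓ q.2)).filter
      (fun p => finrank ℂ p = 1 ∧ 2 ≤ mult p) with hQ
  have hQmem : ∀ p, p ∈ Q ↔ finrank ℂ p = 1 ∧ 2 ≤ mult p := by
    intro p
    constructor
    · intro hp; exact (Finset.mem_filter.1 hp).2
    · rintro ⟨hp1, hp2⟩
      refine Finset.mem_filter.2 ⟨?_, hp1, hp2⟩
      obtain ⟨a, ha, b, hb, hab⟩ := Finset.one_lt_card.1 (hp2 : 2 ≤ (lines p).card)
      simp only [hlines, Finset.mem_filter] at ha hb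
      refine Finset.mem_image.2 ⟨(a, b), Finset.mem_product.2 ⟨ha.1, hb.1⟩, ?_⟩
      exact (aux_point_eq p a b hp1 (hL a ha.1) (hL b hb.1) hab ha.2 hb.2).symm
  have hνcard : ∀ m, 2 ≤ m → ν m = (Q.filter (fun p => mult p = m)).card := by
    intro m hm
    rw [hν' m hm]
    have : {p : Submodule ℂ (Fin 3 → ℂ) | finrank ℂ p = 1 ∧ mult p = m} =
        ↑(Q.filter (fun p => mult p = m)) := by
      ext p
      simp only [Set.mem_setOf_eq, Finset.coe_filter, hQmem]
      constructor
      · rintro ⟨h1, h2⟩; exact ⟨⟨h1, by omega⟩, h2⟩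
      · rintro ⟨⟨h1, _⟩, h2⟩; exact ⟨h1, h2⟩
    rw [this, Set.ncard_coe_finset]
  have hmult_le : ∀ p ∈ Q, mult p ∈ Finset.Icc 2 d := by
    intro p hp
    obtain ⟨h1, h2⟩ := (hQmem p).1 hp
    refine Finset.mem_Icc.2 ⟨h2, ?_⟩
    calc mult p ≤ L.card := Finset.card_filter_le _ _
      _ = d := hdcard.symm
  -- pair counting: ∑ p, mult p * (mult p - 1) ≤ d * (d-1)
  have hpair : ∑ p ∈ Q, mult p * (mult p - 1) ≤ d * (d - 1) := by
    have hdisj : ∀ p ∈ Q, ∀ q ∈ Q, p ≠ q →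
        Disjoint ((lines p).offDiag) ((lines q).offDiag) := by
      intro p hp q hq hne
      rw [Finset.disjoint_left]
      rintro ⟨a, b⟩ hab1 hab2
      rw [Finset.mem_offDiag] at hab1 hab2
      obtain ⟨ha1, hb1, hab⟩ := hab1
      obtain ⟨ha2, hb2, _⟩ := hab2
      simp only [hlines, Finset.mem_filter] at ha1 hb1 ha2 hb2
      have e1 := aux_point_eq p a b ((hQmem p).1 hp).1 (hL a ha1.1) (hL b hb1.1) hab ha1.2 hb1.2
      have e2 := aux_point_eq q a b ((hQmem q).1 hq).1 (hL a ha1.1) (hL b hb1.1) hab ha2.2 hb2.2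
      exact hne (e1.trans e2.symm)
    have hcard : (Q.biUnion (fun p => (lines p).offDiag)).card
        = ∑ p ∈ Q, ((lines p).offDiag).card := Finset.card_biUnion hdisj
    have hsub : Q.biUnion (fun p => (lines p).offDiag) ⊆ L.offDiag := by
      intro x hx
      obtain ⟨p, _, hxp⟩ := Finset.mem_biUnion.1 hx
      rw [Finset.mem_offDiag] at hxp ⊢
      obtain ⟨h1, h2, h3⟩ := hxp
      simp only [hlines, Finset.mem_filter] at h1 h2
      exact ⟨h1.1, h2.1, h3⟩
    have hle := Finset.card_le_card hsub
    rw [hcard, Finset.offDiag_card, ← hdcard] at hle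
    calc ∑ p ∈ Q, mult p * (mult p - 1) = ∑ p ∈ Q, ((lines p).offDiag).card := by
          refine Finset.sum_congr rfl fun p hp => ?_
          rw [Finset.offDiag_card]
          rw [Nat.mul_sub, Nat.mul_one]
      _ ≤ d * d - d := hle
      _ = d * (d - 1) := by rw [Nat.mul_sub, Nat.mul_one]
  -- fiberwise sum
  have hfiber : ∑ m ∈ Finset.Icc 2 d, m * (m - 1) * ν m
      = ∑ p ∈ Q, mult p * (mult p - 1) := by
    rw [← Finset.sum_fiberwise_of_maps_to hmult_le (fun p => mult p * (mult p - 1))]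
    refine Finset.sum_congr rfl fun m hm => ?_
    rw [hνcard m (Finset.mem_Icc.1 hm).1]
    have e : ∑ p ∈ Q.filter (fun p => mult p = m), mult p * (mult p - 1)
        = ∑ _p ∈ Q.filter (fun p => mult p = m), m * (m - 1) :=
      Finset.sum_congr rfl fun p hp => by rw [(Finset.mem_filter.1 hp).2]
    rw [e, Finset.sum_const, smul_eq_mul, mul_comm]
  have hkey : ∑ m ∈ Finset.Icc 2 d, m * (m - 1) * ν m ≤ d * (d - 1) :=
    hfiber ▸ hpair
  -- two distinct points: bounded total multiplicity
  have hbound : ∀ p q : Submodule ℂ (Fin 3 → ℂ), finrank ℂ p = 1 → finrank ℂ q = 1 →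
      p ≠ q → mult p + mult q ≤ d + 1 := by
    intro p q hp hq hne
    have hinter : ((lines p) ∩ (lines q)).card ≤ 1 := by
      rw [Finset.card_le_one]
      intro a ha b hb
      rw [Finset.mem_inter] at ha hb
      simp only [hlines, Finset.mem_filter] at ha hb
      by_contra hab
      have hr := aux_inf_rank a b (hL a ha.1.1) (hL b hb.1.1) hab
      have hle : p ⊔ q ≤ a ⊓ b :=
        sup_le (le_inf ha.1.2 hb.1.2) (le_inf ha.2.2 hb.2.2)
      have h1 := aux_sup_rank p q hp hq hne
      have h2 := Submodule.finrank_mono hle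
      omega
    have hunion : ((lines p) ∪ (lines q)).card ≤ d := by
      rw [hdcard]
      exact Finset.card_le_card (Finset.union_subset (Finset.filter_subset _ _)
        (Finset.filter_subset _ _))
    have hie := Finset.card_union_add_card_inter (lines p) (lines q)
    have e1 : mult p = (lines p).card := rfl
    have e2 : mult q = (lines q).card := rfl
    omega
  constructor
  · -- Case 1: all multiplicities small
    intro h
    rw [hC]
    have hd3 : (0:ℚ) < (d:ℚ) - 3 := by
      have : (4:ℚ) ≤ (d:ℚ) := by exact_mod_cast hd4
      linarith
    refine mul_pos (div_pos (by norm_num) hd3) ?_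
    have hsum : 0 ≤ ∑ m ∈ Finset.Icc 2 d,
        (m : ℚ) * ((m : ℚ) - 1) / (2 * (d : ℚ) - 3 * (m : ℚ)) * (ν m : ℚ) := by
      refine Finset.sum_nonneg fun m hm => ?_
      rcases eq_or_ne (ν m) 0 with h0 | h0
      · rw [h0]; simp
      · have hm2 := (Finset.mem_Icc.1 hm).1
        have h3 := h m hm2 h0
        have hden : (0:ℚ) < 2 * (d:ℚ) - 3 * (m:ℚ) := by
          have : (3 * m : ℚ) < 2 * d := by exact_mod_cast h3
          linarith
        have hm2' : (2:ℚ) ≤ (m:ℚ) := by exact_mod_cast hm2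
        have hnum : (0:ℚ) ≤ (m:ℚ) * ((m:ℚ) - 1) := by nlinarith
        exact mul_nonneg (div_nonneg hnum hden.le) (Nat.cast_nonneg _)
    have hd1 : (0:ℚ) < (d:ℚ) - 1 := by linarith
    linarith
  · -- Case 2: some big multiplicity
    rintro ⟨m₀, hm₀2, hν₀, hlt⟩
    have hne0 : {p : Submodule ℂ (Fin 3 → ℂ) | finrank ℂ p = 1 ∧ mult p = m₀}.Nonempty := by
      apply Set.nonempty_of_ncard_ne_zero
      rw [← hν' m₀ hm₀2]; exact hν₀
    obtain ⟨p₀, hp₀r, hp₀m⟩ := hne0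
    have hm₀d : m₀ ≤ d - 2 := hp₀m ▸ hind' p₀ hp₀r
    have hd7 : 7 ≤ d := by omega
    have hν₀1 : ν m₀ = 1 := by
      rw [hνcard m₀ hm₀2]
      have hsing : Q.filter (fun p => mult p = m₀) = {p₀} := by
        apply Finset.eq_singleton_iff_unique_mem.2
        constructor
        · exact Finset.mem_filter.2 ⟨(hQmem p₀).2 ⟨hp₀r, by omega⟩, hp₀m⟩
        · intro p hp
          obtain ⟨hpQ, hpm⟩ := Finset.mem_filter.1 hp
          by_contra hne
          have := hbound p p₀ ((hQmem p).1 hpQ).1 hp₀r hne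
          omega
      rw [hsing, Finset.card_singleton]
    have hm₀Icc : m₀ ∈ Finset.Icc 2 d := Finset.mem_Icc.2 ⟨hm₀2, by omega⟩
    have herase : ∑ m ∈ (Finset.Icc 2 d).erase m₀, m * (m - 1) * ν m + m₀ * (m₀ - 1)
        ≤ d * (d - 1) := by
      have he : m₀ * (m₀ - 1) * ν m₀ + ∑ m ∈ (Finset.Icc 2 d).erase m₀, m * (m - 1) * ν m
          = ∑ m ∈ Finset.Icc 2 d, m * (m - 1) * ν m :=
        Finset.add_sum_erase (Finset.Icc 2 d) (fun m => m * (m - 1) * ν m) hm₀Icc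
      rw [hν₀1, mul_one] at he
      omega
    -- pass to ℚ
    set A : ℚ := 3 * (m₀:ℚ) - (d:ℚ) - 3 with hA
    have hApos : (0:ℚ) < A := by
      rw [hA]
      have h1 : (2 * d + 1 : ℚ) ≤ 3 * (m₀:ℚ) := by exact_mod_cast hlt
      have h2 : (7:ℚ) ≤ (d:ℚ) := by exact_mod_cast hd7
      linarith
    have hterm : ∀ m ∈ (Finset.Icc 2 d).erase m₀,
        (m : ℚ) * ((m : ℚ) - 1) / (2 * (d : ℚ) - 3 * (m : ℚ)) * (ν m : ℚ)
          ≤ ((m * (m - 1) * ν m : ℕ) : ℚ) / A := by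
      intro m hm
      obtain ⟨hmne, hmIcc⟩ := Finset.mem_erase.1 hm
      obtain ⟨hm2, hmd⟩ := Finset.mem_Icc.1 hmIcc
      have hcast : ((m * (m - 1) * ν m : ℕ) : ℚ) = (m:ℚ) * ((m:ℚ) - 1) * (ν m : ℚ) := by
        push_cast [Nat.cast_sub (by omega : 1 ≤ m)]
        ring
      rcases eq_or_ne (ν m) 0 with h0 | h0
      · rw [h0]; simp
      · -- there is a point of multiplicity m, distinct from p₀
        have hne0' : {p : Submodule ℂ (Fin 3 → ℂ) |
            finrank ℂ p = 1 ∧ mult p = m}.Nonempty := by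
          apply Set.nonempty_of_ncard_ne_zero
          rw [← hν' m hm2]; exact h0
        obtain ⟨q, hqr, hqm⟩ := hne0'
        have hqne : q ≠ p₀ := by
          intro h; rw [h, hp₀m] at hqm; exact hmne hqm.symm
        have hb := hbound q p₀ hqr hp₀r hqne
        rw [hqm, hp₀m] at hb
        -- so 2d - 3m ≥ A > 0
        have hAle : A ≤ 2 * (d:ℚ) - 3 * (m:ℚ) := by
          rw [hA]
          have : ((m + m₀ : ℕ) : ℚ) ≤ ((d + 1 : ℕ) : ℚ) := by exact_mod_cast hb
          push_cast at this
          linarith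
        have hnum : (0:ℚ) ≤ (m:ℚ) * ((m:ℚ) - 1) := by
          have : (2:ℚ) ≤ (m:ℚ) := by exact_mod_cast hm2
          nlinarith
        have hdiv : (m:ℚ) * ((m:ℚ) - 1) / (2 * (d:ℚ) - 3 * (m:ℚ))
            ≤ (m:ℚ) * ((m:ℚ) - 1) / A :=
          div_le_div_of_nonneg_left hnum hApos hAle
        calc (m : ℚ) * ((m : ℚ) - 1) / (2 * (d : ℚ) - 3 * (m : ℚ)) * (ν m : ℚ)
            ≤ (m:ℚ) * ((m:ℚ) - 1) / A * (ν m : ℚ) :=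
              mul_le_mul_of_nonneg_right hdiv (Nat.cast_nonneg _)
          _ = ((m * (m - 1) * ν m : ℕ) : ℚ) / A := by rw [hcast]; ring
    have hN : ((∑ m ∈ (Finset.Icc 2 d).erase m₀, m * (m - 1) * ν m : ℕ) : ℚ)
        ≤ (d:ℚ) * ((d:ℚ) - 1) - (m₀:ℚ) * ((m₀:ℚ) - 1) := by
      have c1 : ((d * (d - 1) : ℕ) : ℚ) = (d:ℚ) * ((d:ℚ) - 1) := by
        push_cast [Nat.cast_sub (by omega : 1 ≤ d)]; ring
      have c2 : ((m₀ * (m₀ - 1) : ℕ) : ℚ) = (m₀:ℚ) * ((m₀:ℚ) - 1) := by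
        push_cast [Nat.cast_sub (by omega : 1 ≤ m₀)]; ring
      have h2 : ((∑ m ∈ (Finset.Icc 2 d).erase m₀, m * (m - 1) * ν m : ℕ) : ℚ)
          + ((m₀ * (m₀ - 1) : ℕ) : ℚ) ≤ ((d * (d - 1) : ℕ) : ℚ) := by
        exact_mod_cast herase
      rw [c1, c2] at h2
      linarith
    have hsum_erase : ∑ m ∈ (Finset.Icc 2 d).erase m₀,
        (m : ℚ) * ((m : ℚ) - 1) / (2 * (d : ℚ) - 3 * (m : ℚ)) * (ν m : ℚ)
          ≤ ((d:ℚ) * ((d:ℚ) - 1) - (m₀:ℚ) * ((m₀:ℚ) - 1)) / A := by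
      calc ∑ m ∈ (Finset.Icc 2 d).erase m₀,
          (m : ℚ) * ((m : ℚ) - 1) / (2 * (d : ℚ) - 3 * (m : ℚ)) * (ν m : ℚ)
          ≤ ∑ m ∈ (Finset.Icc 2 d).erase m₀, ((m * (m - 1) * ν m : ℕ) : ℚ) / A :=
            Finset.sum_le_sum hterm
        _ = ((∑ m ∈ (Finset.Icc 2 d).erase m₀, (m * (m - 1) * ν m : ℕ) : ℕ) : ℚ) / A := by
            rw [Nat.cast_sum, Finset.sum_div]
        _ ≤ ((d:ℚ) * ((d:ℚ) - 1) - (m₀:ℚ) * ((m₀:ℚ) - 1)) / A := by gcongr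
    -- assemble
    rw [hC]
    set S := ∑ m ∈ Finset.Icc 2 d,
        (m : ℚ) * ((m : ℚ) - 1) / (2 * (d : ℚ) - 3 * (m : ℚ)) * (ν m : ℚ) with hS
    have hsplit : (m₀:ℚ) * ((m₀:ℚ) - 1) / (2 * (d:ℚ) - 3 * (m₀:ℚ)) * (ν m₀ : ℚ)
        + ∑ m ∈ (Finset.Icc 2 d).erase m₀,
            (m : ℚ) * ((m : ℚ) - 1) / (2 * (d : ℚ) - 3 * (m : ℚ)) * (ν m : ℚ) = S :=
      Finset.add_sum_erase (Finset.Icc 2 d)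
        (fun m => (m : ℚ) * ((m : ℚ) - 1) / (2 * (d : ℚ) - 3 * (m : ℚ)) * (ν m : ℚ)) hm₀Icc
    set B : ℚ := 3 * (m₀:ℚ) - 2 * (d:ℚ) with hB
    have hBpos : (0:ℚ) < B := by
      rw [hB]
      have h1 : (2 * d : ℚ) < 3 * (m₀:ℚ) := by exact_mod_cast hlt
      linarith
    set M : ℚ := (m₀:ℚ) * ((m₀:ℚ) - 1) with hM
    set D : ℚ := (d:ℚ) * ((d:ℚ) - 1) with hD
    have hterm₀ : (m₀:ℚ) * ((m₀:ℚ) - 1) / (2 * (d:ℚ) - 3 * (m₀:ℚ)) * (ν m₀ : ℚ)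
        = -(M / B) := by
      rw [hν₀1, hM, hB]
      push_cast
      rw [show 2 * (d:ℚ) - 3 * (m₀:ℚ) = -(3 * (m₀:ℚ) - 2 * (d:ℚ)) by ring]
      rw [div_neg]
      ring
    have hSle : S ≤ -(M / B) + (D - M) / A := by
      rw [← hsplit, hterm₀]
      exact add_le_add_right hsum_erase _
    -- final arithmetic
    have hdQ : (7:ℚ) ≤ (d:ℚ) := by exact_mod_cast hd7
    have hm₀Q : (2 * d + 1 : ℚ) ≤ 3 * (m₀:ℚ) := by exact_mod_cast hlt
    have hm₀dQ : 3 * (m₀:ℚ) ≤ 3 * (d:ℚ) - 6 := by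
      have : (m₀ : ℚ) ≤ ((d - 2 : ℕ) : ℚ) := by exact_mod_cast hm₀d
      push_cast [Nat.cast_sub (by omega : 2 ≤ d)] at this
      linarith
    have hpoly : (((d:ℚ) - 1) * A * B + (D - M) * B - M * A) < 0 := by
      rw [hA, hB, hM, hD]
      nlinarith [sq_nonneg (3*(m₀:ℚ) - 2*(d:ℚ) - 1), sq_nonneg ((d:ℚ) - (m₀:ℚ) - 2),
        sq_nonneg (3*(m₀:ℚ) - 2*(d:ℚ)),
        mul_nonneg (sub_nonneg.2 hm₀Q) (sub_nonneg.2 hm₀dQ)]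
    have hABpos : (0:ℚ) < A * B := mul_pos hApos hBpos
    have hexp : (d:ℚ) - 1 + (-(M / B) + (D - M) / A)
        = (((d:ℚ) - 1) * A * B + (D - M) * B - M * A) / (A * B) := by
      field_simp
      ring
    have hneg : (d:ℚ) - 1 + S < 0 := by
      have h2 : (d:ℚ) - 1 + (-(M / B) + (D - M) / A) < 0 := by
        rw [hexp]
        exact div_neg_of_neg_of_pos hpoly hABpos
      linarith
    have hd3 : (0:ℚ) < (d:ℚ) - 3 := by linarith
    exact mul_neg_of_pos_of_neg (div_pos (by norm_num) hd3) hneg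
end
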